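/- For any 1 ≤ p < ∞, τ > 0, and t ∈ ℝ, the function τ ↦ log Θ_p(τ; t) is twice differentiable with second derivative ∂²/∂τ² log Θ_p(τ; t) = E_{X∼D_p(τ;t)}[|X|^{2p}] − μ_p(τ; t)², and this second derivative is strictly positive. -/

import Mathlib

open Real BigOperators

/-- `Θ_p(τ; s) = ∑_{z ∈ ℤ} exp(-τ |z - s|^p)`. -/
noncomputable def Theta1 (p τ s : ℝ) : ℝ :=
  ∑' z : ℤ, Real.exp (-τ * |(z : ℝ) - s| ^ p)

/-- `μ_p(τ; s) = E_{X ∼ D_p(τ;s)}[|X|^p]`, where `D_p(τ; s)` assigns to each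
`x ∈ ℤ - s` probability `exp(-τ|x|^p)/Θ_p(τ; s)`. -/
noncomputable def mu1 (p τ s : ℝ) : ℝ :=
  (∑' z : ℤ, |(z : ℝ) - s| ^ p * Real.exp (-τ * |(z : ℝ) - s| ^ p)) / Theta1 p τ s

/-- `E_{X ∼ D_p(τ;s)}[|X|^{2p}]`, the second-moment analogue of `μ_p`. -/
noncomputable def secondMoment (p τ s : ℝ) : ℝ :=
  (∑' z : ℤ, |(z : ℝ) - s| ^ (2 * p) * Real.exp (-τ * |(z : ℝ) - s| ^ p)) / Theta1 p τ s

noncomputable def Gaux (p t : ℝ) (k : ℕ) (τ : ℝ) : ℝ :=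
  ∑' z : ℤ, (|(z : ℝ) - t| ^ p) ^ k * Real.exp (-τ * |(z : ℝ) - t| ^ p)

lemma summable_base {d : ℝ} (hd : 0 < d) :
    Summable (fun z : ℤ => Real.exp (-d * |(z : ℝ)|)) := by
  have geo : Summable (fun n : ℕ => Real.exp (-d) ^ n) :=
    summable_geometric_of_lt_one (Real.exp_nonneg _) (Real.exp_lt_one_iff.mpr (by linarith))
  apply Summable.of_nat_of_neg
  · refine geo.congr fun n => ?_
    rw [← Real.exp_nat_mul]
    norm_num [mul_comm]
  · refine geo.congr fun n => ?_
    rw [← Real.exp_nat_mul]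
    push_cast
    rw [abs_neg, abs_of_nonneg (by positivity : (0:ℝ) ≤ (n:ℝ))]
    ring_nf

lemma summable_aux (p t : ℝ) (hp : 1 ≤ p) {c : ℝ} (hc : 0 < c) (k : ℕ) :
    Summable (fun z : ℤ => (|(z : ℝ) - t| ^ p) ^ k * Real.exp (-c * |(z : ℝ) - t| ^ p)) := by
  have hd : 0 < c / 2 := by linarith
  set K : ℝ := (k.factorial : ℝ) * (2 / c) ^ k * Real.exp (c / 2) * Real.exp (c / 2 * |t|) with hK
  refine Summable.of_nonneg_of_le (fun z => by positivity)
    (fun z => ?_) (((summable_base hd).mul_left K))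
  set x : ℝ := |(z : ℝ) - t| with hx
  have hx0 : 0 ≤ x := abs_nonneg _
  set A : ℝ := x ^ p with hA
  have hA0 : 0 ≤ A := Real.rpow_nonneg hx0 p
  -- step 1 : A^k * exp (-c*A) ≤ k! (2/c)^k * exp (-(c/2)*A)
  have s1 : A ^ k * Real.exp (-c * A) ≤
      (k.factorial : ℝ) * (2 / c) ^ k * Real.exp (-(c / 2) * A) := by
    have h1 : A ^ k ≤ (k.factorial : ℝ) * (2 / c) ^ k * Real.exp (c / 2 * A) := by
      have := Real.pow_div_factorial_le_exp (x := c / 2 * A) (by positivity) k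
      rw [div_le_iff₀ (by positivity : (0:ℝ) < (k.factorial : ℝ))] at this
      calc A ^ k = (c / 2 * A) ^ k * (2 / c) ^ k := by
            rw [← mul_pow]; field_simp
        _ ≤ Real.exp (c / 2 * A) * (k.factorial : ℝ) * (2 / c) ^ k := by
            have h2c : (0:ℝ) ≤ (2 / c) ^ k := by positivity
            nlinarith [this, h2c]
        _ = (k.factorial : ℝ) * (2 / c) ^ k * Real.exp (c / 2 * A) := by ring
    calc A ^ k * Real.exp (-c * A)
        ≤ ((k.factorial : ℝ) * (2 / c) ^ k * Real.exp (c / 2 * A)) * Real.exp (-c * A) :=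
          mul_le_mul_of_nonneg_right h1 (Real.exp_nonneg _)
      _ = (k.factorial : ℝ) * (2 / c) ^ k * Real.exp (-(c / 2) * A) := by
          rw [mul_assoc, ← Real.exp_add]; ring_nf
  -- step 2 : exp (-(c/2) * x^p) ≤ exp (c/2) * exp (-(c/2) * x)
  have s2 : Real.exp (-(c / 2) * A) ≤ Real.exp (c / 2) * Real.exp (-(c / 2) * x) := by
    rcases le_or_gt 1 x with h | h
    · have hxA : x ≤ A := by
        calc x = x ^ (1:ℝ) := (Real.rpow_one x).symm
          _ ≤ x ^ p := Real.rpow_le_rpow_of_exponent_le h hp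
      calc Real.exp (-(c / 2) * A) ≤ Real.exp (-(c / 2) * x) :=
            Real.exp_le_exp.mpr (by nlinarith)
        _ ≤ Real.exp (c / 2) * Real.exp (-(c / 2) * x) := by
            nlinarith [Real.one_le_exp (by positivity : (0:ℝ) ≤ c / 2), Real.exp_pos (-(c/2)*x)]
    · have : Real.exp (-(c / 2) * A) ≤ 1 := Real.exp_le_one_iff.mpr (by nlinarith)
      calc Real.exp (-(c / 2) * A) ≤ 1 := this
        _ = Real.exp (c / 2) * Real.exp (-(c / 2)) := by rw [← Real.exp_add]; ring_nf; exact Real.exp_zero.symm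
        _ ≤ Real.exp (c / 2) * Real.exp (-(c / 2) * x) := by
            have := Real.exp_le_exp.mpr (show -(c/2) ≤ -(c/2)*x by nlinarith)
            nlinarith [Real.exp_pos (c/2)]
  -- step 3 : exp (-(c/2) * x) ≤ exp ((c/2)|t|) * exp (-(c/2)|z|)
  have s3 : Real.exp (-(c / 2) * x) ≤ Real.exp (c / 2 * |t|) * Real.exp (-(c / 2) * |(z : ℝ)|) := by
    rw [← Real.exp_add]
    apply Real.exp_le_exp.mpr
    have habs : |(z : ℝ)| - |t| ≤ x := by
      have := abs_sub_abs_le_abs_sub (z : ℝ) t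
      simpa [hx] using this
    nlinarith
  calc A ^ k * Real.exp (-c * A)
      ≤ (k.factorial : ℝ) * (2 / c) ^ k * Real.exp (-(c / 2) * A) := s1
    _ ≤ (k.factorial : ℝ) * (2 / c) ^ k *
        (Real.exp (c / 2) * (Real.exp (c / 2 * |t|) * Real.exp (-(c / 2) * |(z : ℝ)|))) := by
        have hfac : (0:ℝ) ≤ (k.factorial : ℝ) * (2 / c) ^ k := by positivity
        apply mul_le_mul_of_nonneg_left _ hfac
        calc Real.exp (-(c / 2) * A) ≤ Real.exp (c / 2) * Real.exp (-(c / 2) * x) := s2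
          _ ≤ _ := mul_le_mul_of_nonneg_left s3 (Real.exp_nonneg _)
    _ = K * Real.exp (-(c / 2) * |(z : ℝ)|) := by rw [hK]; ring

lemma Gaux_pos (p t : ℝ) (hp : 1 ≤ p) {τ : ℝ} (hτ : 0 < τ) : 0 < Gaux p t 0 τ := by
  refine Summable.tsum_pos (summable_aux p t hp hτ 0) (fun z => by positivity) 0 (by positivity)

lemma hasDerivAt_Gaux (p t : ℝ) (hp : 1 ≤ p) {τ : ℝ} (hτ : 0 < τ) (k : ℕ) {x : ℝ}
    (hx : x ∈ Set.Ioi (τ / 2)) :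
    HasDerivAt (fun y => Gaux p t k y) (-Gaux p t (k + 1) x) x := by
  have key := hasDerivAt_tsum_of_isPreconnected
    (u := fun z : ℤ => (|(z : ℝ) - t| ^ p) ^ (k + 1) * Real.exp (-(τ / 2) * |(z : ℝ) - t| ^ p))
    (g := fun (z : ℤ) (y : ℝ) => (|(z : ℝ) - t| ^ p) ^ k * Real.exp (-y * |(z : ℝ) - t| ^ p))
    (g' := fun (z : ℤ) (y : ℝ) =>
      -((|(z : ℝ) - t| ^ p) ^ (k + 1) * Real.exp (-y * |(z : ℝ) - t| ^ p)))
    (summable_aux p t hp (by linarith) (k + 1)) isOpen_Ioi (isPreconnected_Ioi)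
    (fun z y _ => ?_) (fun z y hy => ?_) (Set.mem_Ioi.mpr (half_lt_self hτ))
    (summable_aux p t hp hτ k) hx
  · have : -Gaux p t (k + 1) x =
        ∑' z : ℤ, -((|(z : ℝ) - t| ^ p) ^ (k + 1) * Real.exp (-x * |(z : ℝ) - t| ^ p)) := by
      rw [Gaux, ← tsum_neg]
    rw [this]
    exact key
  · -- pointwise derivative
    set A : ℝ := |(z : ℝ) - t| ^ p with hA
    have h1 : HasDerivAt (fun y : ℝ => -y * A) (-A) y := by
      simpa using ((hasDerivAt_id y).neg.mul_const A)
    have h2 := (h1.exp).const_mul (A ^ k)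
    refine h2.congr_deriv ?_
    show A ^ k * (Real.exp (-y * A) * -A) = -(A ^ (k + 1) * Real.exp (-y * A))
    rw [pow_succ]; ring
  · -- bound
    set A : ℝ := |(z : ℝ) - t| ^ p with hA
    have hA0 : 0 ≤ A := Real.rpow_nonneg (abs_nonneg _) p
    have : ‖-(A ^ (k + 1) * Real.exp (-y * A))‖ = A ^ (k + 1) * Real.exp (-y * A) := by
      rw [norm_neg, Real.norm_eq_abs, abs_of_nonneg (by positivity)]
    rw [this]
    have := Set.mem_Ioi.mp hy
    apply mul_le_mul_of_nonneg_left _ (by positivity)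
    exact Real.exp_le_exp.mpr (by nlinarith)


/-- For any `1 ≤ p < ∞`, `τ > 0` and `t ∈ ℝ`, the function `τ ↦ log Θ_p(τ; t)` is twice
differentiable at `τ`: its derivative function has derivative
`E_{X∼D_p(τ;t)}[|X|^{2p}] − μ_p(τ; t)²` at `τ`, and this quantity is strictly positive. -/
theorem hasDerivAt_deriv_log_theta (p τ t : ℝ) (hp : 1 ≤ p) (hτ : 0 < τ) :
    HasDerivAt (deriv (fun τ' => Real.log (Theta1 p τ' t)))
      (secondMoment p τ t - (mu1 p τ t) ^ 2) τ ∧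
      0 < secondMoment p τ t - (mu1 p τ t) ^ 2 := by
  have hTG : ∀ y : ℝ, Theta1 p y t = Gaux p t 0 y := by
    intro y
    refine tsum_congr fun z => ?_
    rw [pow_zero, one_mul]
  have hτs : τ ∈ Set.Ioi (τ / 2) := Set.mem_Ioi.mpr (half_lt_self hτ)
  have hpos : ∀ x ∈ Set.Ioi (τ / 2), 0 < Gaux p t 0 x := fun x hx =>
    Gaux_pos p t hp (lt_trans (by linarith) (Set.mem_Ioi.mp hx))
  have hG0 : 0 < Gaux p t 0 τ := hpos τ hτs
  have hG0ne : Gaux p t 0 τ ≠ 0 := ne_of_gt hG0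
  -- first derivative of log Θ on the open set
  have hlog : ∀ x ∈ Set.Ioi (τ / 2),
      HasDerivAt (fun y => Real.log (Theta1 p y t)) (-Gaux p t 1 x / Gaux p t 0 x) x := by
    intro x hx
    have h := (hasDerivAt_Gaux p t hp hτ 0 hx).log (ne_of_gt (hpos x hx))
    exact h.congr_of_eventuallyEq (Filter.Eventually.of_forall fun y => by simp only [hTG])
  have hEq : deriv (fun τ' => Real.log (Theta1 p τ' t)) =ᶠ[nhds τ]
      fun x => -Gaux p t 1 x / Gaux p t 0 x :=
    Filter.eventuallyEq_of_mem (isOpen_Ioi.mem_nhds hτs) fun x hx => (hlog x hx).deriv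
  -- rewrite secondMoment and mu1 in terms of Gaux
  have hsec : secondMoment p τ t = Gaux p t 2 τ / Gaux p t 0 τ := by
    rw [secondMoment, hTG τ, Gaux]
    congr 1
    refine tsum_congr fun z => ?_
    rw [show (2 : ℝ) * p = p * 2 by ring, Real.rpow_mul (abs_nonneg _), Real.rpow_two, sq,
      ← sq, sq]
  have hmu : mu1 p τ t = Gaux p t 1 τ / Gaux p t 0 τ := by
    rw [mu1, hTG τ, Gaux]
    congr 1
    refine tsum_congr fun z => ?_
    rw [pow_one]
  -- second derivative
  have hd1 := hasDerivAt_Gaux p t hp hτ 1 hτs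
  have hd0 := hasDerivAt_Gaux p t hp hτ 0 hτs
  have hdiv := (hd1.neg.div hd0 hG0ne)
  have hfinal : HasDerivAt (fun x => -Gaux p t 1 x / Gaux p t 0 x)
      (secondMoment p τ t - mu1 p τ t ^ 2) τ := by
    refine hdiv.congr_deriv ?_
    rw [hsec, hmu, Pi.neg_apply]
    field_simp
  refine ⟨hfinal.congr_of_eventuallyEq hEq, ?_⟩
  -- positivity : variance is positive
  rw [hsec, hmu]
  set m : ℝ := Gaux p t 1 τ / Gaux p t 0 τ with hm
  have hmG : m * Gaux p t 0 τ = Gaux p t 1 τ := by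
    rw [hm]; field_simp
  set A : ℤ → ℝ := fun z => |(z : ℝ) - t| ^ p with hAdef
  set w : ℤ → ℝ := fun z => Real.exp (-τ * |(z : ℝ) - t| ^ p) with hwdef
  have h2 := summable_aux p t hp hτ 2
  have h1 := summable_aux p t hp hτ 1
  have h0 := summable_aux p t hp hτ 0
  have hVs : Summable (fun z : ℤ => (A z - m) ^ 2 * w z) := by
    refine (((h2.sub (h1.mul_left (2 * m))).add (h0.mul_left (m ^ 2)))).congr fun z => ?_
    show A z ^ 2 * w z - 2 * m * (A z ^ 1 * w z) + m ^ 2 * (A z ^ 0 * w z) = (A z - m) ^ 2 * w z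
    ring
  have hVeq : (∑' z : ℤ, (A z - m) ^ 2 * w z) =
      Gaux p t 2 τ - 2 * m * Gaux p t 1 τ + m ^ 2 * Gaux p t 0 τ := by
    have step : (∑' z : ℤ, (A z - m) ^ 2 * w z) =
        ∑' z : ℤ, (A z ^ 2 * w z - 2 * m * (A z ^ 1 * w z) + m ^ 2 * (A z ^ 0 * w z)) :=
      tsum_congr fun z => by ring
    rw [step, Summable.tsum_add (h2.sub (h1.mul_left (2 * m))) (h0.mul_left (m ^ 2)),
      Summable.tsum_sub h2 (h1.mul_left (2 * m)), tsum_mul_left, tsum_mul_left]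
    rfl
  have hVpos : 0 < ∑' z : ℤ, (A z - m) ^ 2 * w z := by
    -- find an index where A z ≠ m
    set n : ℤ := ⌈t⌉ with hn
    have hb1 : (1 : ℝ) ≤ ((n + 1 : ℤ) : ℝ) - t := by
      push_cast
      have := Int.le_ceil t
      linarith
    have hb2 : ((n + 1 : ℤ) : ℝ) - t < ((n + 2 : ℤ) : ℝ) - t := by push_cast; linarith
    have hAlt : A (n + 1) < A (n + 2) := by
      rw [hAdef]
      simp only
      rw [abs_of_nonneg (by linarith), abs_of_nonneg (by linarith)]
      exact Real.rpow_lt_rpow (by linarith) hb2 (by linarith)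
    have hzne : A (n + 1) ≠ m ∨ A (n + 2) ≠ m := by
      by_contra h
      push_neg at h
      rw [h.1, h.2] at hAlt
      exact lt_irrefl m hAlt
    have hwpos : ∀ z : ℤ, 0 < w z := fun z => Real.exp_pos _
    have hsq : ∀ z : ℤ, A z ≠ m → 0 < (A z - m) ^ 2 := fun z hne =>
      lt_of_le_of_ne (sq_nonneg _) (Ne.symm (pow_ne_zero 2 (sub_ne_zero.mpr hne)))
    rcases hzne with h | h
    · exact Summable.tsum_pos hVs (fun z => by positivity) (n + 1) (mul_pos (hsq _ h) (hwpos _))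
    · exact Summable.tsum_pos hVs (fun z => by positivity) (n + 2) (mul_pos (hsq _ h) (hwpos _))
  have hVval : (∑' z : ℤ, (A z - m) ^ 2 * w z) = Gaux p t 2 τ - m ^ 2 * Gaux p t 0 τ := by
    rw [hVeq]
    linear_combination (2 * m) * hmG
  have : 0 < Gaux p t 2 τ - m ^ 2 * Gaux p t 0 τ := hVval ▸ hVpos
  have hgoal : Gaux p t 2 τ / Gaux p t 0 τ - m ^ 2 =
      (Gaux p t 2 τ - m ^ 2 * Gaux p t 0 τ) / Gaux p t 0 τ := by
    field_simp
  rw [hgoal]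
  exact div_pos this hG0
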